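/- Let A be a zero-dimensional Noetherian (positively graded) ring with graded maximal ideal m_A, and ω_A its canonical module. Then ((0 :_A m_A))·ω_A = (0 :_{ω_A} m_A); that is, the socle of ω_A equals the product of the socle of A with ω_A. -/

import Mathlib

set_option synthInstance.maxHeartbeats 1000000
set_option maxHeartbeats 1000000

/-- Let `A` be a zero-dimensional Noetherian positively graded ring (over a
field `k = A₀`) with graded maximal ideal `m_A`, and `ω_A` its canonical module (the graded
Matlis dual `Hom_k(A, k)` of `A`). Then `(0 :_A m_A)·ω_A = (0 :_{ω_A} m_A)`: the socle of
`ω_A` equals the product of the socle of `A` with `ω_A`. -/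
theorem socle_smul_canonicalModule {k A : Type*} [Field k] [CommRing A] [Algebra k A]
    [IsNoetherianRing A]
    (𝒜 : ℕ → Submodule k A) [GradedAlgebra 𝒜]
    (h𝒜 : 𝒜 0 ≤ LinearMap.range (Algebra.linearMap k A))
    (hdim : ringKrullDim A = 0)
    (ω : Type*) [AddCommGroup ω] [Module A ω] [Module k ω] [IsScalarTower k A ω]
    -- `ω` is the (graded) Matlis dual of `A`, i.e. `ω ≅ Hom_k(A, k)` with the natural
    -- `A`-module structure `(a • φ)(y) = φ(a * y)`
    (e : ω ≃ₗ[k] (A →ₗ[k] k))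
    (he : ∀ (a : A) (x : ω) (y : A), e (a • x) y = e x (a * y)) :
    (HomogeneousIdeal.irrelevant 𝒜).toIdeal.annihilator • (⊤ : Submodule A ω)
      = Submodule.torsionBySet A ω ((HomogeneousIdeal.irrelevant 𝒜).toIdeal : Set A) := by
  classical
  set m : Ideal A := (HomogeneousIdeal.irrelevant 𝒜).toIdeal with hm_def
  by_cases hA : Subsingleton A
  · have hsub : Subsingleton (A →ₗ[k] k) :=
      ⟨fun f g => by ext a; rw [Subsingleton.elim a 0]; simp⟩
    have hω : Subsingleton ω := e.toEquiv.subsingleton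
    ext x
    rw [Subsingleton.elim x 0]
    simp
  have hAnt : Nontrivial A := not_subsingleton_iff_nontrivial.mp hA
  -- basic facts about the degree-0 projection
  have hproj_mem : ∀ a : A, GradedRing.proj 𝒜 0 a ∈ 𝒜 0 := by
    intro a
    rw [GradedRing.proj_apply]
    exact SetLike.coe_mem _
  have hproj_idem : ∀ a : A, GradedRing.proj 𝒜 0 (GradedRing.proj 𝒜 0 a)
      = GradedRing.proj 𝒜 0 a := by
    intro a
    rw [GradedRing.proj_apply]
    exact DirectSum.decompose_of_mem_same 𝒜 (hproj_mem a)
  have hmem : ∀ a : A, a ∈ m ↔ GradedRing.proj 𝒜 0 a = 0 := fun a => by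
    rw [hm_def, HomogeneousIdeal.mem_iff, HomogeneousIdeal.mem_irrelevant_iff]
  have hsubm : ∀ a : A, a - GradedRing.proj 𝒜 0 a ∈ m := by
    intro a
    rw [hmem, map_sub, hproj_idem, sub_self]
  have hcoeff : ∀ a : A, ∃ c : k, algebraMap k A c = GradedRing.proj 𝒜 0 a := by
    intro a
    obtain ⟨c, hc⟩ := h𝒜 (hproj_mem a)
    exact ⟨c, hc⟩
  have hone : GradedRing.proj 𝒜 0 (1 : A) = 1 := by
    rw [GradedRing.proj_apply]
    exact DirectSum.decompose_of_mem_same 𝒜 (SetLike.one_mem_graded 𝒜)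
  -- m is maximal
  have hmmax : m.IsMaximal := by
    rw [Ideal.isMaximal_iff]
    constructor
    · intro h
      rw [hmem, hone] at h
      exact one_ne_zero h
    · intro J x hmJ hxm hxJ
      obtain ⟨c, hc⟩ := hcoeff x
      have hpx : GradedRing.proj 𝒜 0 x ≠ 0 := by
        intro h0
        exact hxm ((hmem x).mpr h0)
      have hcne : c ≠ 0 := by
        rintro rfl
        rw [map_zero] at hc
        exact hpx hc.symm
      have hpJ : GradedRing.proj 𝒜 0 x ∈ J := by
        have : x - GradedRing.proj 𝒜 0 x ∈ J := hmJ (hsubm x)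
        have := J.sub_mem hxJ this
        simpa using this
      have : algebraMap k A c⁻¹ * GradedRing.proj 𝒜 0 x ∈ J := J.mul_mem_left _ hpJ
      rwa [← hc, ← map_mul, inv_mul_cancel₀ hcne, map_one] at this
  -- every prime contains m
  have hkey : ∀ P : Ideal A, P.IsPrime → m ≤ P := by
    intro P hP
    set Q : Ideal A := (P.homogeneousCore 𝒜).toIdeal with hQ_def
    have hQp : Q.IsPrime := hP.homogeneousCore (𝒜 := 𝒜)
    have hQm : Q ≤ m := by
      intro q hq
      rw [hmem]
      by_contra h0
      have hq0 : GradedRing.proj 𝒜 0 q ∈ Q := by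
        have := (P.homogeneousCore 𝒜).isHomogeneous 0 hq
        rwa [GradedRing.proj_apply]
      obtain ⟨c, hc⟩ := hcoeff q
      have hcne : c ≠ 0 := by
        rintro rfl
        rw [map_zero] at hc
        exact h0 hc.symm
      have : (1 : A) ∈ Q := by
        have h1 : algebraMap k A c⁻¹ * GradedRing.proj 𝒜 0 q ∈ Q := Q.mul_mem_left _ hq0
        rwa [← hc, ← map_mul, inv_mul_cancel₀ hcne, map_one] at h1
      exact hQp.ne_top (Ideal.eq_top_iff_one Q |>.mpr this)
    have hQeq : Q = m := by
      by_contra hne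
      have hlt : Q < m := lt_of_le_of_ne hQm hne
      have hltP : (⟨Q, hQp⟩ : PrimeSpectrum A) < ⟨m, hmmax.isPrime⟩ := hlt
      let C : LTSeries (PrimeSpectrum A) :=
        ⟨1, ![⟨Q, hQp⟩, ⟨m, hmmax.isPrime⟩], by
          intro i
          fin_cases i
          simpa using hltP⟩
      have := Order.LTSeries.length_le_krullDim C
      rw [show Order.krullDim (PrimeSpectrum A) = ringKrullDim A from rfl, hdim] at this
      norm_num [C] at this
    rw [← hQeq]
    exact Ideal.toIdeal_homogeneousCore_le 𝒜 P
  -- m is nilpotent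
  have hnil : ∃ n : ℕ, m ^ n = ⊥ := by
    have hrad : m ≤ (⊥ : Ideal A).radical := by
      rw [Ideal.radical_eq_sInf]
      exact le_sInf fun J hJ => hkey J hJ.2
    obtain ⟨n, hn⟩ := Ideal.exists_pow_le_of_le_radical_of_fg hrad
      (IsNoetherian.noetherian m)
    exact ⟨n, le_bot_iff.mp hn⟩
  -- a nonzero socle element
  obtain ⟨s, hsm, hsne⟩ : ∃ s : A, s ∈ m.annihilator ∧ s ≠ 0 := by
    let n := Nat.find hnil
    have hn : m ^ n = ⊥ := Nat.find_spec hnil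
    have hn0 : n ≠ 0 := by
      intro h
      rw [h, pow_zero, Ideal.one_eq_top] at hn
      exact top_ne_bot hn
    have hprev : m ^ (n - 1) ≠ ⊥ := Nat.find_min hnil (Nat.sub_lt (Nat.pos_of_ne_zero hn0) one_pos)
    obtain ⟨s, hs, hsne⟩ := Submodule.exists_mem_ne_zero_of_ne_bot hprev
    refine ⟨s, ?_, hsne⟩
    rw [Submodule.mem_annihilator]
    intro b hb
    have : s * b ∈ m ^ (n - 1) * m := Ideal.mul_mem_mul hs hb
    rw [← pow_succ, Nat.sub_add_cancel (Nat.one_le_iff_ne_zero.mpr hn0), hn] at this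
    simpa using this
  -- main equality
  apply le_antisymm
  · rw [Submodule.smul_le]
    intro r hr x _
    rw [Submodule.mem_torsionBySet_iff]
    rintro ⟨a, ha⟩
    have hra : r * a = 0 := by
      have := Submodule.mem_annihilator.mp hr a ha
      simpa [smul_eq_mul] using this
    rw [smul_smul]
    simp only [SetLike.mem_coe] at ha
    rw [show a * r = 0 from by rw [mul_comm]; exact hra, zero_smul]
  · intro x hx
    -- the functional e x vanishes on m
    have hφm : ∀ a ∈ m, e x a = 0 := by
      intro a ha
      have h0 : a • x = 0 := (Submodule.mem_torsionBySet_iff _ _).mp hx ⟨a, ha⟩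
      have := he a x 1
      rw [h0, map_zero, LinearMap.zero_apply] at this
      simpa using this.symm
    -- a functional not vanishing on s
    have : ¬ ∀ g : Module.Dual k A, g s = 0 := by
      rw [Module.forall_dual_apply_eq_zero_iff k s]
      exact hsne
    push_neg at this
    obtain ⟨g, hg⟩ := this
    set c : k := (e x) 1 * (g s)⁻¹ with hc_def
    set z : ω := c • (e.symm g) with hz_def
    have hxz : x = s • z := by
      apply e.injective
      ext a
      obtain ⟨ca, hca⟩ := hcoeff a
      -- RHS
      have hrhs : e (s • z) a = ca * (e x) 1 := by
        rw [he s z a]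
        have hsa : s * a = ca • s := by
          have h1 : s * (a - GradedRing.proj 𝒜 0 a) = 0 := by
            have := Submodule.mem_annihilator.mp hsm _ (hsubm a)
            simpa [smul_eq_mul] using this
          have h2 : s * a = s * GradedRing.proj 𝒜 0 a := by
            rw [← sub_eq_zero, ← mul_sub]; exact h1
          rw [h2, ← hca, Algebra.smul_def, mul_comm]
        rw [hz_def, map_smul, LinearMap.smul_apply, e.apply_symm_apply, hsa, map_smul]
        rw [hc_def]
        field_simp
        rw [smul_eq_mul, smul_eq_mul, div_mul_eq_mul_div, div_eq_iff hg]; ring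
      -- LHS
      have hlhs : e x a = ca * (e x) 1 := by
        have : e x a = e x (GradedRing.proj 𝒜 0 a) + e x (a - GradedRing.proj 𝒜 0 a) := by
          rw [← map_add]; ring_nf
        rw [this, hφm _ (hsubm a), add_zero, ← hca, Algebra.algebraMap_eq_smul_one, map_smul]
        simp [smul_eq_mul]
      rw [hlhs, hrhs]
    rw [hxz]
    exact Submodule.smul_mem_smul hsm Submodule.mem_top
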